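/- Suppose X is a dense linear subspace of ℓ²(S), S' ⊆ S, X↓S' is dense in ℓ²(S)↓S', and a ∈ X satisfies a↓S' ∉ X. Then there is no subspace X'' of X with X'' orthogonal to X↓S' and X = (X↓S') + X''. (Proof idea: writing a = a' + a'' with a' ∈ X↓S' and a'' ∈ X'' forces a''↓S' ≠ 0, and density of X↓S' in ℓ²(S)↓S' yields b ∈ X↓S' with (a'', b) ≠ 0, contradicting orthogonality.) -/

import Mathlib

noncomputable section
open scoped InnerProductSpace ENNReal

/-- An orthonormal subset of an inner product space. -/
def OrthSet (k : Type*) {E : Type*} [RCLike k] [NormedAddCommGroup E]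
    [InnerProductSpace k E] (B : Set E) : Prop :=
  Orthonormal k ((↑) : B → E)

/-- A maximal orthonormal system of the whole space. -/
def MaximalOrthSet (k : Type*) {E : Type*} [RCLike k] [NormedAddCommGroup E]
    [InnerProductSpace k E] (B : Set E) : Prop :=
  OrthSet k B ∧ ∀ C : Set E, B ⊆ C → OrthSet k C → C = B

/-- An orthonormal basis (as a set): an orthonormal system whose linear span is dense. -/
def IsOrthBasisSet (k : Type*) {E : Type*} [RCLike k] [NormedAddCommGroup E]
    [InnerProductSpace k E] (B : Set E) : Prop :=
  OrthSet k B ∧ Dense (Submodule.span k B : Set E)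

/-- The space has an orthonormal basis (is non-pathological). -/
def HasOrthBasis (k E : Type*) [RCLike k] [NormedAddCommGroup E]
    [InnerProductSpace k E] : Prop :=
  ∃ B : Set E, IsOrthBasisSet k B

/-- Density: least cardinality of a dense subset. -/
def densityCard (E : Type*) [TopologicalSpace E] : Cardinal :=
  sInf { c | ∃ D : Set E, Dense D ∧ Cardinal.mk D = c }

/-- A maximal orthonormal system of a subspace `X`. -/
def MaximalOrthIn (k : Type*) {E : Type*} [RCLike k] [NormedAddCommGroup E]
    [InnerProductSpace k E] (X : Submodule k E) (B : Set E) : Prop :=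
  B ⊆ X ∧ OrthSet k B ∧ ∀ C : Set E, C ⊆ X → B ⊆ C → OrthSet k C → C = B

/-- An orthonormal basis of the subspace `X`: an orthonormal subset of `X`
whose linear span is dense in `X`. -/
def IsOrthBasisOf (k : Type*) {E : Type*} [RCLike k] [NormedAddCommGroup E]
    [InnerProductSpace k E] (X : Submodule k E) (B : Set E) : Prop :=
  B ⊆ X ∧ OrthSet k B ∧ (X : Set E) ⊆ closure (Submodule.span k B : Set E)

/-- `X₀` is an orthogonal direct summand of `X`. -/
def IsOrthSummand (k : Type*) {E : Type*} [RCLike k] [NormedAddCommGroup E]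
    [InnerProductSpace k E] (X X₀ : Submodule k E) : Prop :=
  ∃ X'' : Submodule k E, X'' ≤ X ∧ (∀ u ∈ X₀, ∀ v ∈ X'', (inner k u v : k) = 0) ∧
    X₀ ⊔ X'' = X

/-- The closed subspace of `ℓ²(S)` of vectors with support contained in `A`. -/
def lpRes (k : Type*) {S : Type*} [RCLike k] (A : Set S) :
    Submodule k (lp (fun _ : S => k) 2) where
  carrier := {u | ∀ s ∉ A, u s = 0}
  zero_mem' := by intro s _; simp
  add_mem' := by intro a b ha hb s hs; simp [lp.coeFn_add, ha s hs, hb s hs]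
  smul_mem' := by intro c a ha s hs; simp [lp.coeFn_smul, ha s hs]

/-- The truncation `u↓A` of `u ∈ ℓ²(S)` to a subset `A ⊆ S`. -/
def lpTrunc {k : Type*} {S : Type*} [RCLike k] (u : lp (fun _ : S => k) 2) (A : Set S) :
    lp (fun _ : S => k) 2 :=
  ⟨A.indicator ⇑u, by
    refine memℓp_gen ?_
    have hs : Summable fun s => ‖u s‖ ^ (2 : ℝ≥0∞).toReal :=
      (memℓp_gen_iff (by norm_num)).1 (lp.memℓp u)
    refine hs.of_nonneg_of_le (fun s => by positivity) (fun s => ?_)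
    by_cases hsA : s ∈ A
    · simp [Set.indicator, hsA]
    · simp only [Set.indicator, hsA, if_false, norm_zero]
      rw [Real.zero_rpow (by norm_num)]
      positivity⟩

/-- if `a ∈ X` and `a↓S' ∉ X` then `X↓S'` is not an orthogonal direct
summand of `X`. -/
theorem stmt17 {k : Type*} [RCLike k] {S : Type*}
    (X : Submodule k (lp (fun _ : S => k) 2))
    (hX : Dense (X : Set (lp (fun _ : S => k) 2)))
    (S' : Set S)
    (hdense : (lpRes k S' : Set (lp (fun _ : S => k) 2)) ⊆
      closure ((X ⊓ lpRes k S' : Submodule k (lp (fun _ : S => k) 2)) :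
        Set (lp (fun _ : S => k) 2)))
    (a : lp (fun _ : S => k) 2) (ha : a ∈ X) (hta : lpTrunc a S' ∉ X) :
    ¬ ∃ X'' : Submodule k (lp (fun _ : S => k) 2), X'' ≤ X ∧
        (∀ u ∈ X ⊓ lpRes k S', ∀ v ∈ X'', (inner k u v : k) = 0) ∧
        (X ⊓ lpRes k S') ⊔ X'' = X := by
  rintro ⟨X'', hle, horth, hsup⟩
  obtain ⟨a', ha', a'', ha'', hsum⟩ := Submodule.mem_sup.1 (hsup ▸ ha)
  set w := lpTrunc a'' S' with hw
  have hwcoe : ∀ s, w s = S'.indicator (⇑a'') s := fun s => rfl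
  have ha'res : ∀ s ∉ S', a' s = 0 := ha'.2
  have htr : lpTrunc a S' = a' + w := by
    apply lp.ext
    funext s
    by_cases hs : s ∈ S'
    · have : lpTrunc a S' s = a s := Set.indicator_of_mem hs _
      rw [this, ← hsum, lp.coeFn_add, Pi.add_apply, lp.coeFn_add, Pi.add_apply,
        hwcoe s, Set.indicator_of_mem hs]
    · have h1 : lpTrunc a S' s = 0 := Set.indicator_of_notMem hs _
      rw [h1, lp.coeFn_add, Pi.add_apply, ha'res s hs, hwcoe s,
        Set.indicator_of_notMem hs, add_zero]
  have hwne : w ≠ 0 := by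
    intro h0
    apply hta
    rw [htr, h0, add_zero]
    exact ha'.1
  have hwres : w ∈ lpRes k S' := fun s hs => Set.indicator_of_notMem hs _
  have hwcl : w ∈ closure ((X ⊓ lpRes k S' : Submodule k (lp (fun _ : S => k) 2)) :
      Set (lp (fun _ : S => k) 2)) := hdense hwres
  have hclosed : IsClosed {u : lp (fun _ : S => k) 2 | (inner k u a'' : k) = 0} :=
    isClosed_eq (Continuous.inner continuous_id continuous_const) continuous_const
  have hsub : ((X ⊓ lpRes k S' : Submodule k (lp (fun _ : S => k) 2)) :
      Set (lp (fun _ : S => k) 2)) ⊆ {u | (inner k u a'' : k) = 0} :=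
    fun u hu => horth u hu a'' ha''
  have hwa : (inner k w a'' : k) = 0 := closure_minimal hsub hclosed hwcl
  have hww : (inner k w w : k) = (inner k w a'' : k) := by
    rw [lp.inner_eq_tsum, lp.inner_eq_tsum]
    congr 1
    funext s
    by_cases hs : s ∈ S'
    · rw [hwcoe s, Set.indicator_of_mem hs]
    · rw [hwcoe s, Set.indicator_of_notMem hs]
      simp
  exact hwne (inner_self_eq_zero.1 (hww.trans hwa))
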